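/- Let V, W be finite-dimensional complex vector spaces, V ≠ 0, and let N ∈ End(W) be nilpotent. Suppose Q : W → V and P : V → W satisfy: Ker Q ∩ Ker N = 0 and Im P + Im N = W. If b ∈ GL(W) commutes with N and satisfies Q ∘ b⁻¹ = Q and b ∘ P = P, then b = id_W. -/

import Mathlib

/-- if the datum `(V,W,N,Q,P)` is stable (`Ker Q ∩ Ker N = 0`,
`Im P + Im N = W`) with `V ≠ 0` and `N` nilpotent, then any `b ∈ GL(W)` commuting
with `N` and satisfying `Q ∘ b⁻¹ = Q`, `b ∘ P = P` is the identity. -/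
theorem stmt1
    (V W : Type*) [AddCommGroup V] [Module ℂ V] [FiniteDimensional ℂ V] [Nontrivial V]
    [AddCommGroup W] [Module ℂ W] [FiniteDimensional ℂ W]
    (N : W →ₗ[ℂ] W) (hN : IsNilpotent N) (Q : W →ₗ[ℂ] V) (P : V →ₗ[ℂ] W)
    (hst1 : LinearMap.ker Q ⊓ LinearMap.ker N = ⊥)
    (hst2 : LinearMap.range P ⊔ LinearMap.range N = ⊤)
    (b : W ≃ₗ[ℂ] W)
    (hbN : (b : W →ₗ[ℂ] W) ∘ₗ N = N ∘ₗ (b : W →ₗ[ℂ] W))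
    (hbQ : Q ∘ₗ (b.symm : W →ₗ[ℂ] W) = Q)
    (hbP : (b : W →ₗ[ℂ] W) ∘ₗ P = P) :
    b = LinearEquiv.refl ℂ W := by
  obtain ⟨k, hk⟩ := hN
  set c : W →ₗ[ℂ] W := (b : W →ₗ[ℂ] W) - LinearMap.id with hc
  have hcP : ∀ v, c (P v) = 0 := by
    intro v
    have := congrFun (congrArg DFunLike.coe hbP) v
    simp only [LinearMap.comp_apply] at this
    simp [hc, this]
  have hcN : ∀ w, c (N w) = N (c w) := by
    intro w
    have := congrFun (congrArg DFunLike.coe hbN) w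
    simp only [LinearMap.comp_apply] at this
    simp [hc, this]
  have key : ∀ n : ℕ, ∀ w : W, ∃ u : W, c w = (N ^ n) (c u) := by
    intro n
    induction n with
    | zero => intro w; exact ⟨w, by simp⟩
    | succ n ih =>
      intro w
      have hw : w ∈ LinearMap.range P ⊔ LinearMap.range N := by
        rw [hst2]; trivial
      obtain ⟨p, hp, q, hq, hpq⟩ := Submodule.mem_sup.mp hw
      obtain ⟨u, hu⟩ := hq
      obtain ⟨v, hv⟩ := hp
      obtain ⟨u', hu'⟩ := ih u
      refine ⟨u', ?_⟩
      have : c w = N (c u) := by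
        rw [← hpq, map_add, ← hv, hcP, zero_add, ← hu, hcN]
      rw [this, hu', pow_succ', Module.End.mul_apply]
  have hcz : ∀ w, c w = 0 := by
    intro w
    obtain ⟨u, hu⟩ := key k w
    rw [hu, hk]
    simp
  ext w
  have := hcz w
  simp [hc, sub_eq_zero] at this
  simpa using this
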